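/- Types are downward closed with respect to the introduction of divergence: let M be a term, z a variable, and N, Q closed terms with Q ≲ N and M[N/z] closed. Then (i) for every type A, if M[N/z] ∈ T̄⟦A⟧ then M[Q/z] ∈ T̄⟦A⟧; and (ii) for every finitely verifiable type F, if M[N/z] ∉ T⟦F⟧ then M[Q/z] ∉ T⟦F⟧. -/

import Mathlib

namespace PCF

/-- Terms of the simple CBV, PCF-like language.  Variables are natural numbers. -/
inductive Tm : Type
  | var : ℕ → Tm
  | zero : Tm
  | succ : Tm → Tm
  | pred : Tm → Tm
  | ifz : Tm → Tm → Tm → Tm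
  | abs : ℕ → Tm → Tm
  | app : Tm → Tm → Tm
  | fix : ℕ → Tm → Tm
  | pair : Tm → Tm → Tm
  | lett : ℕ → ℕ → Tm → Tm → Tm
  deriving DecidableEq

/-- The numeral `succ^n(zero)`. -/
def numeral : ℕ → Tm
  | 0 => .zero
  | n + 1 => .succ (numeral n)

/-- Values. -/
inductive IsValue : Tm → Prop
  | var (x : ℕ) : IsValue (.var x)
  | num (n : ℕ) : IsValue (numeral n)
  | pair {V W : Tm} : IsValue V → IsValue W → IsValue (.pair V W)
  | abs (x : ℕ) (M : Tm) : IsValue (.abs x M)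

/-- Capture-permitting substitution `M[N/x]` (adequate since we only ever
substitute closed terms). -/
def subst (x : ℕ) (N : Tm) : Tm → Tm
  | .var y => if y = x then N else .var y
  | .zero => .zero
  | .succ M => .succ (subst x N M)
  | .pred M => .pred (subst x N M)
  | .ifz M P Q => .ifz (subst x N M) (subst x N P) (subst x N Q)
  | .abs y M => if y = x then .abs y M else .abs y (subst x N M)
  | .app M P => .app (subst x N M) (subst x N P)
  | .fix y M => if y = x then .fix y M else .fix y (subst x N M)
  | .pair M P => .pair (subst x N M) (subst x N P)
  | .lett y z M P =>
      .lett y z (subst x N M) (if y = x ∨ z = x then P else subst x N P)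

/-- Free variables. -/
def fv : Tm → Finset ℕ
  | .var y => {y}
  | .zero => ∅
  | .succ M => fv M
  | .pred M => fv M
  | .ifz M P Q => fv M ∪ fv P ∪ fv Q
  | .abs y M => fv M \ {y}
  | .app M P => fv M ∪ fv P
  | .fix y M => fv M \ {y}
  | .pair M P => fv M ∪ fv P
  | .lett y z M P => fv M ∪ (fv P \ {y, z})

def ClosedTm (M : Tm) : Prop := fv M = ∅

/-- One-step call-by-value reduction (closure of the redex rules under
evaluation contexts). -/
inductive Step : Tm → Tm → Prop
  | ifz_zero {N P : Tm} : Step (.ifz (numeral 0) N P) N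
  | ifz_succ {n : ℕ} {N P : Tm} : Step (.ifz (numeral (n + 1)) N P) P
  | lett_beta {x y : ℕ} {V W M : Tm} : IsValue V → IsValue W →
      Step (.lett x y (.pair V W) M) (subst y W (subst x V M))
  | fix_step {x : ℕ} {M : Tm} : Step (.fix x M) (subst x (.fix x M) M)
  | pred_zero : Step (.pred (numeral 0)) (numeral 0)
  | pred_succ {n : ℕ} : Step (.pred (numeral (n + 1))) (numeral n)
  | beta {x : ℕ} {M V : Tm} : IsValue V → Step (.app (.abs x M) V) (subst x V M)
  | succ_ctx {M M' : Tm} : Step M M' → Step (.succ M) (.succ M')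
  | pred_ctx {M M' : Tm} : Step M M' → Step (.pred M) (.pred M')
  | pair_left {M M' N : Tm} : Step M M' → Step (.pair M N) (.pair M' N)
  | pair_right {V N N' : Tm} : IsValue V → Step N N' → Step (.pair V N) (.pair V N')
  | lett_ctx {x y : ℕ} {M M' N : Tm} : Step M M' → Step (.lett x y M N) (.lett x y M' N)
  | ifz_ctx {M M' N P : Tm} : Step M M' → Step (.ifz M N P) (.ifz M' N P)
  | app_right {x : ℕ} {M N N' : Tm} : Step N N' →
      Step (.app (.abs x M) N) (.app (.abs x M) N')
  | app_left {M M' N : Tm} : Step M M' → Step (.app M N) (.app M' N)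

/-- Many-step reduction. -/
def Steps : Tm → Tm → Prop := Relation.ReflTransGen Step

def NormalForm (M : Tm) : Prop := ¬ ∃ N, Step M N

def Evaluates (M : Tm) : Prop := ∃ V, Steps M V ∧ IsValue V

/-- `M` diverges: it has no normal form. -/
def Diverges (M : Tm) : Prop := ¬ ∃ N, Steps M N ∧ NormalForm N

def Stuck (M : Tm) : Prop := NormalForm M ∧ ¬ IsValue M

def GoesWrong (M : Tm) : Prop := ∃ P, Steps M P ∧ Stuck P

/-- `div` = `fix x. x`. -/
def divTm : Tm := .fix 0 (.var 0)

/-- `P ≲ N`: if `P` reduces to a normal form then `N` reduces to the same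
normal form. -/
def RefBelow (P N : Tm) : Prop := ∀ R, Steps P R → NormalForm R → Steps N R

/-- Fixpoint approximants. -/
def fixApprox (x : ℕ) (M : Tm) : ℕ → Tm
  | 0 => divTm
  | n + 1 => subst x (fixApprox x M n) M

/-- Finitely verifiable types. -/
inductive FTy : Type
  | nat : FTy
  | prod : FTy → FTy → FTy
  deriving DecidableEq

/-- Types: `Nat | A×B | A→B | A⇝F | Ok` (necessity arrows only to finitely
verifiable types). -/
inductive Ty : Type
  | nat : Ty
  | prod : Ty → Ty → Ty
  | arrow : Ty → Ty → Ty
  | narrow : Ty → FTy → Ty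
  | ok : Ty
  deriving DecidableEq

/-- Inclusion of finitely verifiable types into types. -/
def FTy.toTy : FTy → Ty
  | .nat => .nat
  | .prod A B => .prod A.toTy B.toTy

/-- `T⟦·⟧` applied to a set of values: the terms that evaluate into it. -/
def TSem (Sv : Tm → Prop) (M : Tm) : Prop :=
  ClosedTm M ∧ ∃ V, Steps M V ∧ IsValue V ∧ Sv V

/-- `T̄⟦·⟧`: evaluate into the set, or diverge. -/
def TBarSem (Sv : Tm → Prop) (M : Tm) : Prop :=
  TSem Sv M ∨ (ClosedTm M ∧ Diverges M)

/-- Semantics of finitely verifiable types. -/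
def FSem : FTy → Tm → Prop
  | .nat => fun M => ∃ n, M = numeral n
  | .prod A B => fun M => ∃ V W, M = .pair V W ∧ FSem A V ∧ FSem B W

/-- Semantics of types, as sets of closed values. -/
def Sem : Ty → Tm → Prop
  | .nat => fun M => ∃ n, M = numeral n
  | .prod A B => fun M => ∃ V W, M = .pair V W ∧ Sem A V ∧ Sem B W
  | .arrow A B => fun M => ∃ x P, M = .abs x P ∧ ClosedTm M ∧
      ∀ V, ClosedTm V → IsValue V → Sem A V → TBarSem (Sem B) (subst x V P)
  | .narrow A F => fun M => ∃ x P, M = .abs x P ∧ ClosedTm M ∧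
      ∀ V, ClosedTm V → IsValue V → TSem (FSem F) (subst x V P) → Sem A V
  | .ok => fun M => ClosedTm M ∧ IsValue M

/-- Typing formulas `M : A`. -/
structure Formula where
  tm : Tm
  ty : Ty
  deriving DecidableEq

/-- Make a formula. -/
def fm (M : Tm) (A : Ty) : Formula := ⟨M, A⟩

/-- `x` does not occur free in any formula of `Γ`. -/
def FreshFor (x : ℕ) (Γ : Finset Formula) : Prop := ∀ φ ∈ Γ, x ∉ fv φ.tm

def IsArrowTy (A : Ty) : Prop :=
  (∃ B C, A = .arrow B C) ∨ (∃ B F, A = .narrow B F)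

def IsProdTy (A : Ty) : Prop := ∃ B C, A = .prod B C

/-- Disjointness of types: one is `Nat` and the other is not, or one is an
arrow and the other is not, or one is a product and the other is not. -/
def Disj (A B : Ty) : Prop :=
  (A = .nat ∧ B ≠ .nat) ∨ (B = .nat ∧ A ≠ .nat) ∨
  (IsArrowTy A ∧ ¬ IsArrowTy B) ∨ (IsArrowTy B ∧ ¬ IsArrowTy A) ∨
  (IsProdTy A ∧ ¬ IsProdTy B) ∨ (IsProdTy B ∧ ¬ IsProdTy A)

/-- The two-sided type system (including the `Ok` rules). -/
inductive Der : Finset Formula → Finset Formula → Prop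
  | id (Γ Δ : Finset Formula) (x : ℕ) (A : Ty) :
      Der (insert (fm (.var x) A) Γ) (insert (fm (.var x) A) Δ)
  | dis {Γ Δ : Finset Formula} {M : Tm} {A B : Ty} :
      Disj A B → Der Γ (insert (fm M B) Δ) → Der (insert (fm M A) Γ) Δ
  | zeroR (Γ Δ : Finset Formula) : Der Γ (insert (fm .zero .nat) Δ)
  | succR {Γ Δ M} : Der Γ (insert (fm M .nat) Δ) → Der Γ (insert (fm (.succ M) .nat) Δ)
  | predR {Γ Δ M} : Der Γ (insert (fm M .nat) Δ) → Der Γ (insert (fm (.pred M) .nat) Δ)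
  | letR {Γ Δ : Finset Formula} {x y : ℕ} {M N : Tm} {A B C : Ty} :
      Der Γ (insert (fm M (.prod B C)) Δ) →
      Der (insert (fm (.var x) B) (insert (fm (.var y) C) Γ)) (insert (fm N A) Δ) →
      FreshFor x Γ → FreshFor x Δ → FreshFor y Γ → FreshFor y Δ →
      Der Γ (insert (fm (.lett x y M N) A) Δ)
  | appR {Γ Δ M N A B} :
      Der Γ (insert (fm M (.arrow B A)) Δ) → Der Γ (insert (fm N B) Δ) →
      Der Γ (insert (fm (.app M N) A) Δ)
  | pairR {Γ Δ M N A B} :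
      Der Γ (insert (fm M A) Δ) → Der Γ (insert (fm N B) Δ) →
      Der Γ (insert (fm (.pair M N) (.prod A B)) Δ)
  | absR {Γ Δ : Finset Formula} {x : ℕ} {M : Tm} {A B : Ty} :
      Der (insert (fm (.var x) B) Γ) (insert (fm M A) Δ) →
      FreshFor x Γ → FreshFor x Δ →
      Der Γ (insert (fm (.abs x M) (.arrow B A)) Δ)
  | abnR {Γ Δ : Finset Formula} {x : ℕ} {M : Tm} {B : Ty} {F : FTy} :
      Der (insert (fm M F.toTy) Γ) (insert (fm (.var x) B) Δ) →
      FreshFor x Γ → FreshFor x Δ →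
      Der Γ (insert (fm (.abs x M) (.narrow B F)) Δ)
  | fixR {Γ Δ : Finset Formula} {x : ℕ} {M : Tm} {A : Ty} :
      Der (insert (fm (.var x) A) Γ) (insert (fm M A) Δ) →
      FreshFor x Γ → FreshFor x Δ →
      Der Γ (insert (fm (.fix x M) A) Δ)
  | ifzR {Γ Δ M N P A} :
      Der Γ (insert (fm M .nat) Δ) → Der Γ (insert (fm N A) Δ) →
      Der Γ (insert (fm P A) Δ) →
      Der Γ (insert (fm (.ifz M N P) A) Δ)
  | succL {Γ Δ M} : Der (insert (fm M .nat) Γ) Δ → Der (insert (fm (.succ M) .nat) Γ) Δ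
  | predL {Γ Δ M} : Der (insert (fm M .nat) Γ) Δ → Der (insert (fm (.pred M) .nat) Γ) Δ
  | appL {Γ Δ : Finset Formula} {M N : Tm} {B : Ty} {A : FTy} :
      Der Γ (insert (fm M (.narrow B A)) Δ) → Der (insert (fm N B) Γ) Δ →
      Der (insert (fm (.app M N) A.toTy) Γ) Δ
  | pairL1 {Γ Δ M1 M2 A1 A2} : Der (insert (fm M1 A1) Γ) Δ →
      Der (insert (fm (.pair M1 M2) (.prod A1 A2)) Γ) Δ
  | pairL2 {Γ Δ M1 M2 A1 A2} : Der (insert (fm M2 A2) Γ) Δ →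
      Der (insert (fm (.pair M1 M2) (.prod A1 A2)) Γ) Δ
  | letL1 {Γ Δ : Finset Formula} {x y : ℕ} {M N : Tm} {A : Ty} :
      Der (insert (fm N A) Γ) Δ →
      FreshFor x Γ → FreshFor x Δ → FreshFor y Γ → FreshFor y Δ →
      Der (insert (fm (.lett x y M N) A) Γ) Δ
  | letL2 {Γ Δ : Finset Formula} {x y : ℕ} {M N : Tm} {A B1 B2 : Ty} :
      Der (insert (fm M (.prod B1 B2)) Γ) Δ →
      Der (insert (fm N A) Γ) (insert (fm (.var x) B1) Δ) →
      Der (insert (fm N A) Γ) (insert (fm (.var y) B2) Δ) →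
      FreshFor x Γ → FreshFor x Δ → FreshFor y Γ → FreshFor y Δ →
      Der (insert (fm (.lett x y M N) A) Γ) Δ
  | ifzL1 {Γ Δ M N P A} : Der (insert (fm M .nat) Γ) Δ →
      Der (insert (fm (.ifz M N P) A) Γ) Δ
  | ifzL2 {Γ Δ M N P A} : Der (insert (fm N A) Γ) Δ → Der (insert (fm P A) Γ) Δ →
      Der (insert (fm (.ifz M N P) A) Γ) Δ
  | okVarR (Γ Δ : Finset Formula) (x : ℕ) : Der Γ (insert (fm (.var x) .ok) Δ)
  | okL {Γ Δ M A} : Der (insert (fm M .ok) Γ) Δ → Der (insert (fm M A) Γ) Δ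
  | okR {Γ Δ M A} : Der Γ (insert (fm M A) Δ) → Der Γ (insert (fm M .ok) Δ)
  | okApL1 {Γ Δ M N A} : Der (insert (fm M (.narrow .ok A)) Γ) Δ →
      Der (insert (fm (.app M N) .ok) Γ) Δ
  | okApL2 {Γ Δ M N} : Der (insert (fm N .ok) Γ) Δ → Der (insert (fm (.app M N) .ok) Γ) Δ
  | okSL {Γ Δ M} : Der (insert (fm M .nat) Γ) Δ → Der (insert (fm (.succ M) .ok) Γ) Δ
  | okPL {Γ Δ M} : Der (insert (fm M .nat) Γ) Δ → Der (insert (fm (.pred M) .ok) Γ) Δ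
  | okPrL1 {Γ Δ M1 M2} : Der (insert (fm M1 .ok) Γ) Δ →
      Der (insert (fm (.pair M1 M2) .ok) Γ) Δ
  | okPrL2 {Γ Δ M1 M2} : Der (insert (fm M2 .ok) Γ) Δ →
      Der (insert (fm (.pair M1 M2) .ok) Γ) Δ

/-- Simultaneous substitution by a valuation (total substitution); suitable
since valuations map variables to closed terms. -/
def msubst (θ : ℕ → Tm) : Tm → Tm
  | .var y => θ y
  | .zero => .zero
  | .succ M => .succ (msubst θ M)
  | .pred M => .pred (msubst θ M)
  | .ifz M P Q => .ifz (msubst θ M) (msubst θ P) (msubst θ Q)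
  | .abs y M => .abs y (msubst (Function.update θ y (.var y)) M)
  | .app M P => .app (msubst θ M) (msubst θ P)
  | .fix y M => .fix y (msubst (Function.update θ y (.var y)) M)
  | .pair M P => .pair (msubst θ M) (msubst θ P)
  | .lett y z M P =>
      .lett y z (msubst θ M)
        (msubst (Function.update (Function.update θ y (.var y)) z (.var z)) P)

/-- A valuation: a substitution by closed terms. -/
def ClosedVal (θ : ℕ → Tm) : Prop := ∀ x, ClosedTm (θ x)

/-- `θ` satisfies `M : A` on the left: `Mθ ∈ T⟦A⟧`. -/
def SatL (θ : ℕ → Tm) (φ : Formula) : Prop := TSem (Sem φ.ty) (msubst θ φ.tm)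

/-- `θ` satisfies `M : A` on the right: `Mθ ∈ T̄⟦A⟧`. -/
def SatR (θ : ℕ → Tm) (φ : Formula) : Prop := TBarSem (Sem φ.ty) (msubst θ φ.tm)

/-- Truth of a judgement: `Γ ⊨ Δ`. -/
def Models (Γ Δ : Finset Formula) : Prop :=
  ∀ θ : ℕ → Tm, ClosedVal θ → (∀ φ ∈ Γ, SatL θ φ) → ∃ φ ∈ Δ, SatR θ φ



/-! ### Auxiliary development -/

section Aux

lemma fv_numeral (n : ℕ) : fv (numeral n) = ∅ := by
  induction n with
  | zero => simp [numeral, fv]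
  | succ m ih => simp [numeral, fv, ih]

lemma isValue_succ_inv {M : Tm} (h : IsValue (.succ M)) : ∃ n, M = numeral n := by
  generalize hE : Tm.succ M = V at h
  cases h with
  | var x => cases hE
  | abs x P => cases hE
  | pair _ _ => cases hE
  | num n =>
    cases n with
    | zero => simp [numeral] at hE
    | succ m =>
      simp only [numeral, Tm.succ.injEq] at hE
      exact ⟨m, hE⟩

lemma isValue_pair_inv {A B : Tm} (h : IsValue (.pair A B)) : IsValue A ∧ IsValue B := by
  generalize hE : Tm.pair A B = V at h
  cases h with
  | var x => cases hE
  | abs x P => cases hE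
  | pair hA hB => injection hE with h1 h2; subst h1; subst h2; exact ⟨hA, hB⟩
  | num n => cases n <;> simp [numeral] at hE

lemma numeral_succ_inv {n : ℕ} {M : Tm} (h : numeral n = .succ M) :
    ∃ m, n = m + 1 ∧ M = numeral m := by
  cases n with
  | zero => simp [numeral] at h
  | succ m => exact ⟨m, rfl, by simp only [numeral] at h; injection h with h; exact h.symm⟩

lemma numeral_zero_inv {n : ℕ} (h : numeral n = .zero) : n = 0 := by
  cases n with
  | zero => rfl
  | succ m => simp [numeral] at h

lemma numeral_inj {m n : ℕ} (h : numeral m = numeral n) : m = n := by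
  induction m generalizing n with
  | zero =>
    cases n with
    | zero => rfl
    | succ k => simp [numeral] at h
  | succ k ih =>
    cases n with
    | zero => simp [numeral] at h
    | succ l =>
      simp only [numeral, Tm.succ.injEq] at h
      rw [ih h]

lemma numeral_zero_ne_succ {n : ℕ} (h : numeral 0 = numeral (n + 1)) : False := by
  simp [numeral] at h

lemma step_numeral {n : ℕ} {M : Tm} (h : Step (numeral n) M) : False := by
  induction n generalizing M with
  | zero => simp only [numeral] at h; cases h
  | succ m ih =>
    simp only [numeral] at h
    cases h with
    | succ_ctx h => exact ih h

lemma value_no_step {V M : Tm} (hV : IsValue V) (h : Step V M) : False := by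
  induction hV generalizing M with
  | var x => cases h
  | num n => exact step_numeral h
  | abs x P => cases h
  | pair hA hB ihA ihB =>
    cases h with
    | pair_left h => exact ihA h
    | pair_right _ h => exact ihB h

lemma value_normal {V : Tm} (hV : IsValue V) : NormalForm V :=
  fun ⟨_, h⟩ => value_no_step hV h

lemma isValue_numeral (n : ℕ) : IsValue (numeral n) := IsValue.num n

lemma step_pred_inv {M X : Tm} (h : Step (.pred M) X) :
    (∃ M', Step M M' ∧ X = .pred M') ∨ (M = numeral 0 ∧ X = numeral 0) ∨
    (∃ n, M = numeral (n + 1) ∧ X = numeral n) := by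
  cases h with
  | pred_zero => exact .inr (.inl ⟨rfl, rfl⟩)
  | pred_succ => exact .inr (.inr ⟨_, rfl, rfl⟩)
  | pred_ctx h => exact .inl ⟨_, h, rfl⟩

lemma step_ifz_inv {M N P X : Tm} (h : Step (.ifz M N P) X) :
    (∃ M', Step M M' ∧ X = .ifz M' N P) ∨ (M = numeral 0 ∧ X = N) ∨
    (∃ n, M = numeral (n + 1) ∧ X = P) := by
  cases h with
  | ifz_zero => exact .inr (.inl ⟨rfl, rfl⟩)
  | ifz_succ => exact .inr (.inr ⟨_, rfl, rfl⟩)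
  | ifz_ctx h => exact .inl ⟨_, h, rfl⟩

/-- Determinism of one-step reduction. -/
lemma step_det {M N₁ N₂ : Tm} (h1 : Step M N₁) (h2 : Step M N₂) : N₁ = N₂ := by
  induction h1 generalizing N₂ with
  | ifz_zero =>
    rcases step_ifz_inv h2 with ⟨M', hM', rfl⟩ | ⟨_, rfl⟩ | ⟨n, hn, rfl⟩
    · exact absurd hM' (fun h => step_numeral h)
    · rfl
    · exact absurd hn numeral_zero_ne_succ
  | ifz_succ =>
    rcases step_ifz_inv h2 with ⟨M', hM', rfl⟩ | ⟨hn, rfl⟩ | ⟨n, hn, rfl⟩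
    · exact absurd hM' (fun h => step_numeral h)
    · exact absurd hn.symm numeral_zero_ne_succ
    · rfl
  | lett_beta hV hW =>
    cases h2 with
    | lett_beta => rfl
    | lett_ctx h => exact absurd h (value_no_step (IsValue.pair hV hW))
  | fix_step => cases h2 with | fix_step => rfl
  | pred_zero =>
    rcases step_pred_inv h2 with ⟨M', hM', rfl⟩ | ⟨_, rfl⟩ | ⟨n, hn, rfl⟩
    · exact absurd hM' (fun h => step_numeral h)
    · rfl
    · exact absurd hn numeral_zero_ne_succ
  | pred_succ =>
    rcases step_pred_inv h2 with ⟨M', hM', rfl⟩ | ⟨hn, rfl⟩ | ⟨n, hn, rfl⟩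
    · exact absurd hM' (fun h => step_numeral h)
    · exact absurd hn.symm numeral_zero_ne_succ
    · have h : _ = n := Nat.succ_injective (numeral_inj hn)
      rw [h]
  | beta hV =>
    cases h2 with
    | beta => rfl
    | app_right h => exact absurd h (value_no_step hV)
    | app_left h => cases h
  | succ_ctx h ih => cases h2 with | succ_ctx h' => rw [ih h']
  | pred_ctx h ih =>
    rcases step_pred_inv h2 with ⟨M', hM', rfl⟩ | ⟨hn, rfl⟩ | ⟨n, hn, rfl⟩
    · rw [ih hM']
    · subst hn; exact absurd h (fun h => step_numeral h)
    · subst hn; exact absurd h (fun h => step_numeral h)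
  | pair_left h ih =>
    cases h2 with
    | pair_left h' => rw [ih h']
    | pair_right hV _ => exact absurd h (value_no_step hV)
  | pair_right hV h ih =>
    cases h2 with
    | pair_left h' => exact absurd h' (value_no_step hV)
    | pair_right _ h' => rw [ih h']
  | lett_ctx h ih =>
    cases h2 with
    | lett_ctx h' => rw [ih h']
    | lett_beta hV hW => exact absurd h (value_no_step (IsValue.pair hV hW))
  | ifz_ctx h ih =>
    rcases step_ifz_inv h2 with ⟨M', hM', rfl⟩ | ⟨hn, rfl⟩ | ⟨n, hn, rfl⟩
    · rw [ih hM']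
    · subst hn; exact absurd h (fun h => step_numeral h)
    · subst hn; exact absurd h (fun h => step_numeral h)
  | app_right h ih =>
    cases h2 with
    | app_right h' => rw [ih h']
    | beta hV => exact absurd h (value_no_step hV)
    | app_left h' => cases h'
  | app_left h ih =>
    cases h2 with
    | app_left h' => rw [ih h']
    | beta => cases h
    | app_right => cases h

lemma step_steps_nf {M M₁ R : Tm} (hs : Step M M₁) (hms : Steps M R)
    (hR : NormalForm R) : Steps M₁ R := by
  rcases (Relation.ReflTransGen.cases_head hms) with rfl | ⟨c, hc, hcR⟩
  · exact absurd ⟨_, hs⟩ hR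
  · rwa [step_det hs hc]

lemma steps_nf_unique {M R : Tm} (h : Steps M R) (hR : NormalForm R) :
    ∀ R', Steps M R' → NormalForm R' → R = R' := by
  induction h using Relation.ReflTransGen.head_induction_on with
  | refl =>
    intro R' h' hR'
    rcases Relation.ReflTransGen.cases_head h' with rfl | ⟨c, hc, _⟩
    · rfl
    · exact absurd ⟨_, hc⟩ hR
  | head hs _ ih =>
    intro R' h' hR'
    exact ih R' (step_steps_nf hs h' hR') hR'

/-! ### Free variables and substitution -/

lemma subst_not_free {x : ℕ} {V P : Tm} (h : x ∉ fv P) : subst x V P = P := by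
  induction P with
  | var y =>
    simp only [fv, Finset.mem_singleton] at h
    simp [subst, Ne.symm h]
  | zero => simp [subst]
  | succ M ih => simp only [fv] at h; simp [subst, ih h]
  | pred M ih => simp only [fv] at h; simp [subst, ih h]
  | ifz M P Q ihM ihP ihQ =>
    simp only [fv, Finset.mem_union, not_or] at h
    simp [subst, ihM h.1.1, ihP h.1.2, ihQ h.2]
  | abs y M ih =>
    simp only [subst]
    by_cases hyx : y = x
    · simp [hyx]
    · simp only [fv, Finset.mem_sdiff, Finset.mem_singleton, not_and, not_not] at h
      have hx : x ∉ fv M := fun hx => hyx (h hx).symm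
      simp [hyx, ih hx]
  | app M P ihM ihP =>
    simp only [fv, Finset.mem_union, not_or] at h
    simp [subst, ihM h.1, ihP h.2]
  | fix y M ih =>
    simp only [subst]
    by_cases hyx : y = x
    · simp [hyx]
    · simp only [fv, Finset.mem_sdiff, Finset.mem_singleton, not_and, not_not] at h
      have hx : x ∉ fv M := fun hx => hyx (h hx).symm
      simp [hyx, ih hx]
  | pair M P ihM ihP =>
    simp only [fv, Finset.mem_union, not_or] at h
    simp [subst, ihM h.1, ihP h.2]
  | lett y w M P ihM ihP =>
    simp only [fv, Finset.mem_union, not_or] at h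
    simp only [subst, ihM h.1]
    by_cases hc : y = x ∨ w = x
    · simp [hc]
    · push_neg at hc
      have hx : x ∉ fv P := by
        intro hxP
        exact h.2 (by simp [Finset.mem_sdiff, hxP, Ne.symm hc.1, Ne.symm hc.2])
      simp [hc.1, hc.2, ihP hx]

lemma subst_closed {x : ℕ} {V P : Tm} (h : ClosedTm P) : subst x V P = P := by
  apply subst_not_free
  simp only [ClosedTm] at h
  simp [h]

lemma fv_subst_subset {x : ℕ} {V : Tm} (M : Tm) :
    fv (subst x V M) ⊆ (fv M \ {x}) ∪ fv V := by
  induction M with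
  | var y =>
    by_cases hyx : y = x
    · simp [subst, hyx]
    · simp only [subst, if_neg hyx, fv]
      intro a ha
      simp only [Finset.mem_singleton] at ha
      simp [ha, hyx]
  | zero => simp [subst, fv]
  | succ M ih => simpa [subst, fv] using ih
  | pred M ih => simpa [subst, fv] using ih
  | ifz M P Q ihM ihP ihQ =>
    simp only [subst, fv]
    intro a ha
    simp only [Finset.mem_union] at ha
    rcases ha with (ha | ha) | ha
    · have := ihM ha; simp only [Finset.mem_union, Finset.mem_sdiff, Finset.mem_singleton] at this ⊢; tauto
    · have := ihP ha; simp only [Finset.mem_union, Finset.mem_sdiff, Finset.mem_singleton] at this ⊢; tauto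
    · have := ihQ ha; simp only [Finset.mem_union, Finset.mem_sdiff, Finset.mem_singleton] at this ⊢; tauto
  | abs y M ih =>
    simp only [subst]
    by_cases hyx : y = x
    · subst hyx
      simp only [if_pos rfl, if_true, fv]
      intro a ha
      simp only [Finset.mem_sdiff, Finset.mem_singleton, Finset.mem_union] at ha ⊢
      tauto
    · simp only [if_neg hyx, fv]
      intro a ha
      simp only [Finset.mem_sdiff, Finset.mem_singleton] at ha
      have := ih ha.1
      simp only [Finset.mem_union, Finset.mem_sdiff, Finset.mem_singleton] at this ⊢
      tauto
  | app M P ihM ihP =>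
    simp only [subst, fv]
    intro a ha
    simp only [Finset.mem_union] at ha
    rcases ha with ha | ha
    · have := ihM ha; simp only [Finset.mem_union, Finset.mem_sdiff, Finset.mem_singleton] at this ⊢; tauto
    · have := ihP ha; simp only [Finset.mem_union, Finset.mem_sdiff, Finset.mem_singleton] at this ⊢; tauto
  | fix y M ih =>
    simp only [subst]
    by_cases hyx : y = x
    · subst hyx
      simp only [if_pos rfl, if_true, fv]
      intro a ha
      simp only [Finset.mem_sdiff, Finset.mem_singleton, Finset.mem_union] at ha ⊢
      tauto
    · simp only [if_neg hyx, fv]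
      intro a ha
      simp only [Finset.mem_sdiff, Finset.mem_singleton] at ha
      have := ih ha.1
      simp only [Finset.mem_union, Finset.mem_sdiff, Finset.mem_singleton] at this ⊢
      tauto
  | pair M P ihM ihP =>
    simp only [subst, fv]
    intro a ha
    simp only [Finset.mem_union] at ha
    rcases ha with ha | ha
    · have := ihM ha; simp only [Finset.mem_union, Finset.mem_sdiff, Finset.mem_singleton] at this ⊢; tauto
    · have := ihP ha; simp only [Finset.mem_union, Finset.mem_sdiff, Finset.mem_singleton] at this ⊢; tauto
  | lett y w M P ihM ihP =>
    simp only [subst, fv]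
    intro a ha
    simp only [Finset.mem_union] at ha
    rcases ha with ha | ha
    · have := ihM ha
      simp only [Finset.mem_union, Finset.mem_sdiff, Finset.mem_singleton, Finset.mem_insert] at this ⊢
      tauto
    · by_cases hc : y = x ∨ w = x
      · rw [if_pos hc] at ha
        simp only [Finset.mem_sdiff, Finset.mem_insert, Finset.mem_singleton] at ha
        simp only [Finset.mem_union, Finset.mem_sdiff, Finset.mem_union,
          Finset.mem_insert, Finset.mem_singleton]
        rcases hc with rfl | rfl <;> tauto
      · rw [if_neg hc] at ha
        simp only [Finset.mem_sdiff, Finset.mem_insert, Finset.mem_singleton] at ha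
        push_neg at hc
        have := ihP ha.1
        simp only [Finset.mem_union, Finset.mem_sdiff, Finset.mem_singleton,
          Finset.mem_insert] at this ⊢
        tauto

lemma step_fv {M M' : Tm} (h : Step M M') : fv M' ⊆ fv M := by
  induction h with
  | ifz_zero =>
    simp only [fv]
    intro a ha; simp [ha]
  | ifz_succ =>
    simp only [fv]
    intro a ha; simp [ha]
  | lett_beta hV hW =>
    intro a ha
    have h1 := fv_subst_subset (x := _) (V := _) _ ha
    simp only [Finset.mem_union, Finset.mem_sdiff, Finset.mem_singleton] at h1
    rcases h1 with ⟨h1, hne⟩ | h1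
    · have h2 := fv_subst_subset (x := _) (V := _) _ h1
      simp only [Finset.mem_union, Finset.mem_sdiff, Finset.mem_singleton] at h2
      simp only [fv, Finset.mem_union, Finset.mem_sdiff, Finset.mem_insert,
        Finset.mem_singleton]
      tauto
    · simp only [fv, Finset.mem_union, Finset.mem_sdiff, Finset.mem_insert,
        Finset.mem_singleton]
      tauto
  | fix_step =>
    intro a ha
    have h1 := fv_subst_subset (x := _) (V := _) _ ha
    simp only [Finset.mem_union, Finset.mem_sdiff, Finset.mem_singleton, fv] at h1 ⊢
    tauto
  | pred_zero => simp [fv]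
  | pred_succ =>
    intro a ha
    rw [fv_numeral] at ha
    simp at ha
  | beta hV =>
    intro a ha
    have h1 := fv_subst_subset (x := _) (V := _) _ ha
    simp only [Finset.mem_union, Finset.mem_sdiff, Finset.mem_singleton, fv] at h1 ⊢
    tauto
  | succ_ctx h ih => simpa [fv] using ih
  | pred_ctx h ih => simpa [fv] using ih
  | pair_left h ih => simp only [fv]; exact Finset.union_subset_union ih (by rfl)
  | pair_right _ h ih => simp only [fv]; exact Finset.union_subset_union (by rfl) ih
  | lett_ctx h ih => simp only [fv]; exact Finset.union_subset_union ih (by rfl)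
  | ifz_ctx h ih =>
    simp only [fv]
    exact Finset.union_subset_union (Finset.union_subset_union ih (by rfl)) (by rfl)
  | app_right h ih => simp only [fv]; exact Finset.union_subset_union (by rfl) ih
  | app_left h ih => simp only [fv]; exact Finset.union_subset_union ih (by rfl)

lemma step_closed {M M' : Tm} (h : Step M M') (hM : ClosedTm M) : ClosedTm M' := by
  simp only [ClosedTm] at *
  exact Finset.subset_empty.mp (hM ▸ step_fv h)

lemma fv_subst_closed {x : ℕ} {V : Tm} (hV : ClosedTm V) (M : Tm) :
    fv (subst x V M) = fv M \ {x} := by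
  simp only [ClosedTm] at hV
  induction M with
  | var y =>
    by_cases hyx : y = x
    · simp [subst, hyx, fv, hV]
    · simp only [subst, if_neg hyx, fv]
      ext a
      simp only [Finset.mem_singleton, Finset.mem_sdiff]
      constructor
      · rintro rfl; exact ⟨rfl, hyx⟩
      · exact fun h => h.1
  | zero => simp [subst, fv]
  | succ M ih => simp [subst, fv, ih]
  | pred M ih => simp [subst, fv, ih]
  | ifz M P Q ihM ihP ihQ =>
    simp only [subst, fv, ihM, ihP, ihQ]
    ext a
    simp only [Finset.mem_union, Finset.mem_sdiff, Finset.mem_singleton]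
    tauto
  | abs y M ih =>
    simp only [subst]
    by_cases hyx : y = x
    · subst hyx
      simp only [if_pos rfl, if_true, fv]
      ext a
      simp only [Finset.mem_sdiff, Finset.mem_singleton]
      tauto
    · simp only [if_neg hyx, fv, ih]
      ext a
      simp only [Finset.mem_sdiff, Finset.mem_singleton]
      tauto
  | app M P ihM ihP =>
    simp only [subst, fv, ihM, ihP]
    ext a
    simp only [Finset.mem_union, Finset.mem_sdiff, Finset.mem_singleton]
    tauto
  | fix y M ih =>
    simp only [subst]
    by_cases hyx : y = x
    · subst hyx
      simp only [if_pos rfl, if_true, fv]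
      ext a
      simp only [Finset.mem_sdiff, Finset.mem_singleton]
      tauto
    · simp only [if_neg hyx, fv, ih]
      ext a
      simp only [Finset.mem_sdiff, Finset.mem_singleton]
      tauto
  | pair M P ihM ihP =>
    simp only [subst, fv, ihM, ihP]
    ext a
    simp only [Finset.mem_union, Finset.mem_sdiff, Finset.mem_singleton]
    tauto
  | lett y w M P ihM ihP =>
    simp only [subst, fv, ihM]
    by_cases hc : y = x ∨ w = x
    · rw [if_pos hc]
      ext a
      simp only [Finset.mem_union, Finset.mem_sdiff, Finset.mem_insert,
        Finset.mem_singleton]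
      rcases hc with rfl | rfl <;> tauto
    · rw [if_neg hc]
      push_neg at hc
      rw [ihP]
      ext a
      simp only [Finset.mem_union, Finset.mem_sdiff, Finset.mem_insert,
        Finset.mem_singleton]
      tauto

/-! ### Steps congruence lemmas -/

lemma steps_succ {M M' : Tm} (h : Steps M M') : Steps (.succ M) (.succ M') :=
  Relation.ReflTransGen.lift Tm.succ (fun _ _ s => Step.succ_ctx s) _ _ h

lemma steps_pred {M M' : Tm} (h : Steps M M') : Steps (.pred M) (.pred M') :=
  Relation.ReflTransGen.lift Tm.pred (fun _ _ s => Step.pred_ctx s) _ _ h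

lemma steps_ifz {M M' P Q : Tm} (h : Steps M M') : Steps (.ifz M P Q) (.ifz M' P Q) :=
  Relation.ReflTransGen.lift (fun t => Tm.ifz t P Q) (fun _ _ s => Step.ifz_ctx s) _ _ h

lemma steps_pair_left {M M' P : Tm} (h : Steps M M') : Steps (.pair M P) (.pair M' P) :=
  Relation.ReflTransGen.lift (fun t => Tm.pair t P) (fun _ _ s => Step.pair_left s) _ _ h

lemma steps_pair_right {V M M' : Tm} (hV : IsValue V) (h : Steps M M') :
    Steps (.pair V M) (.pair V M') :=
  Relation.ReflTransGen.lift (fun t => Tm.pair V t) (fun _ _ s => Step.pair_right hV s) _ _ h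

lemma steps_lett {x y : ℕ} {M M' P : Tm} (h : Steps M M') :
    Steps (.lett x y M P) (.lett x y M' P) :=
  Relation.ReflTransGen.lift (fun t => Tm.lett x y t P) (fun _ _ s => Step.lett_ctx s) _ _ h

lemma steps_app_left {M M' P : Tm} (h : Steps M M') : Steps (.app M P) (.app M' P) :=
  Relation.ReflTransGen.lift (fun t => Tm.app t P) (fun _ _ s => Step.app_left s) _ _ h

lemma steps_app_right {x : ℕ} {B M M' : Tm} (h : Steps M M') :
    Steps (.app (.abs x B) M) (.app (.abs x B) M') :=
  Relation.ReflTransGen.lift (fun t => Tm.app (.abs x B) t) (fun _ _ s => Step.app_right s) _ _ h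

end Aux

/-! ### The simulation relation -/

/-- `Rel N S T` : `S` is obtained from `T` by replacing some closed subterms
`N` by closed terms refinement-below `N`. -/
inductive Rel (N : Tm) : Tm → Tm → Prop
  | hole {Q : Tm} : ClosedTm Q → RefBelow Q N → Rel N Q N
  | var (x : ℕ) : Rel N (.var x) (.var x)
  | zero : Rel N .zero .zero
  | succ {M M' : Tm} : Rel N M M' → Rel N (.succ M) (.succ M')
  | pred {M M' : Tm} : Rel N M M' → Rel N (.pred M) (.pred M')
  | ifz {M M' P P' Q Q' : Tm} : Rel N M M' → Rel N P P' → Rel N Q Q' →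
      Rel N (.ifz M P Q) (.ifz M' P' Q')
  | abs (x : ℕ) {B B' : Tm} : Rel N B B' → Rel N (.abs x B) (.abs x B')
  | app {M M' P P' : Tm} : Rel N M M' → Rel N P P' → Rel N (.app M P) (.app M' P')
  | fixc (x : ℕ) {B B' : Tm} : Rel N B B' → Rel N (.fix x B) (.fix x B')
  | pair {M M' P P' : Tm} : Rel N M M' → Rel N P P' → Rel N (.pair M P) (.pair M' P')
  | lett (x y : ℕ) {M M' P P' : Tm} : Rel N M M' → Rel N P P' →
      Rel N (.lett x y M P) (.lett x y M' P')

lemma rel_refl (N : Tm) : ∀ M, Rel N M M := by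
  intro M
  induction M with
  | var x => exact .var x
  | zero => exact .zero
  | succ M ih => exact .succ ih
  | pred M ih => exact .pred ih
  | ifz M P Q ihM ihP ihQ => exact .ifz ihM ihP ihQ
  | abs x B ih => exact .abs x ih
  | app M P ihM ihP => exact .app ihM ihP
  | fix x B ih => exact .fixc x ih
  | pair M P ihM ihP => exact .pair ihM ihP
  | lett x y M P ihM ihP => exact .lett x y ihM ihP

lemma rel_init {N Q : Tm} (hQc : ClosedTm Q) (hQb : RefBelow Q N) (z : ℕ) :
    ∀ M, Rel N (subst z Q M) (subst z N M) := by
  intro M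
  induction M with
  | var y =>
    simp only [subst]
    by_cases hyz : y = z
    · simp only [if_pos hyz]; exact .hole hQc hQb
    · simp only [if_neg hyz]; exact .var y
  | zero => exact .zero
  | succ M ih => exact .succ ih
  | pred M ih => exact .pred ih
  | ifz M P R ihM ihP ihR => exact .ifz ihM ihP ihR
  | abs y B ih =>
    simp only [subst]
    by_cases hyz : y = z
    · simp only [if_pos hyz]; exact rel_refl N _
    · simp only [if_neg hyz]; exact .abs y ih
  | app M P ihM ihP => exact .app ihM ihP
  | fix y B ih =>
    simp only [subst]
    by_cases hyz : y = z
    · simp only [if_pos hyz]; exact rel_refl N _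
    · simp only [if_neg hyz]; exact .fixc y ih
  | pair M P ihM ihP => exact .pair ihM ihP
  | lett y w M P ihM ihP =>
    simp only [subst]
    by_cases hc : y = z ∨ w = z
    · simp only [if_pos hc]; exact .lett y w ihM (rel_refl N _)
    · simp only [if_neg hc]; exact .lett y w ihM ihP

lemma rel_fv {N S T : Tm} (hN : ClosedTm N) (h : Rel N S T) : fv S = fv T := by
  induction h with
  | hole hQc _ => simp only [ClosedTm] at hQc hN; rw [hQc, hN]
  | var x => rfl
  | zero => rfl
  | succ _ ih => simp [fv, ih]
  | pred _ ih => simp [fv, ih]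
  | ifz _ _ _ ih1 ih2 ih3 => simp [fv, ih1, ih2, ih3]
  | abs x _ ih => simp [fv, ih]
  | app _ _ ih1 ih2 => simp [fv, ih1, ih2]
  | fixc x _ ih => simp [fv, ih]
  | pair _ _ ih1 ih2 => simp [fv, ih1, ih2]
  | lett x y _ _ ih1 ih2 => simp [fv, ih1, ih2]

lemma rel_subst {N S T V W : Tm} (hN : ClosedTm N) (x : ℕ)
    (h : Rel N S T) (hVW : Rel N V W) : Rel N (subst x V S) (subst x W T) := by
  induction h with
  | hole hQc hQb => rw [subst_closed hQc, subst_closed hN]; exact .hole hQc hQb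
  | var y =>
    simp only [subst]
    by_cases hyx : y = x
    · simp only [if_pos hyx]; exact hVW
    · simp only [if_neg hyx]; exact .var y
  | zero => exact .zero
  | succ _ ih => exact .succ ih
  | pred _ ih => exact .pred ih
  | ifz _ _ _ ih1 ih2 ih3 => exact .ifz ih1 ih2 ih3
  | abs y hB ih =>
    simp only [subst]
    by_cases hyx : y = x
    · simp only [if_pos hyx]; exact .abs y (by assumption)
    · simp only [if_neg hyx]; exact .abs y ih
  | app _ _ ih1 ih2 => exact .app ih1 ih2
  | fixc y hB ih =>
    simp only [subst]
    by_cases hyx : y = x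
    · simp only [if_pos hyx]; exact .fixc y (by assumption)
    · simp only [if_neg hyx]; exact .fixc y ih
  | pair _ _ ih1 ih2 => exact .pair ih1 ih2
  | lett y w hM hP ih1 ih2 =>
    simp only [subst]
    by_cases hc : y = x ∨ w = x
    · simp only [if_pos hc]; exact .lett y w ih1 (by assumption)
    · simp only [if_neg hc]; exact .lett y w ih1 ih2

/-- Data produced when tracking a normal form across the simulation. -/
structure NFData (N V T W : Tm) : Prop where
  steps : Steps T W
  rel : Rel N V W
  nf : NormalForm W
  val_iff : IsValue W ↔ IsValue V
  num_fwd : ∀ n, V = numeral n → W = numeral n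
  num_bwd : ∀ n, W = numeral n → V = numeral n
  abs_fwd : ∀ x B, V = .abs x B → ∃ B', W = .abs x B' ∧ Rel N B B'
  abs_bwd : ∀ x B', W = .abs x B' → ∃ B, V = .abs x B ∧ Rel N B B'
  pair_fwd : ∀ V1 V2, V = .pair V1 V2 → ∃ W1 W2, W = .pair W1 W2 ∧ Rel N V1 W1 ∧ Rel N V2 W2
  pair_bwd : ∀ W1 W2, W = .pair W1 W2 → ∃ V1 V2, V = .pair V1 V2 ∧ Rel N V1 W1 ∧ Rel N V2 W2

/-- The identity `NFData`, used for holes and abstractions. -/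
lemma nfdata_self {N V T : Tm} (hsteps : Steps T V) (hnf : NormalForm V) :
    NFData N V T V := by
  refine ⟨hsteps, rel_refl N V, hnf, Iff.rfl, ?_, ?_, ?_, ?_, ?_, ?_⟩
  · exact fun n h => h
  · exact fun n h => h
  · exact fun x B h => ⟨B, h, rel_refl N B⟩
  · exact fun x B h => ⟨B, h, rel_refl N B⟩
  · exact fun V1 V2 h => ⟨V1, V2, h, rel_refl N V1, rel_refl N V2⟩
  · exact fun V1 V2 h => ⟨V1, V2, h, rel_refl N V1, rel_refl N V2⟩

lemma nf_of_succ {M : Tm} (h : NormalForm (.succ M)) : NormalForm M :=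
  fun ⟨_, s⟩ => h ⟨_, .succ_ctx s⟩

lemma not_isValue_pred {M : Tm} (h : IsValue (.pred M)) : False := by
  generalize hE : Tm.pred M = V at h
  cases h with
  | var x => cases hE
  | abs x P => cases hE
  | pair _ _ => cases hE
  | num n => cases n <;> simp [numeral] at hE

lemma not_isValue_ifz {M P Q : Tm} (h : IsValue (.ifz M P Q)) : False := by
  generalize hE : Tm.ifz M P Q = V at h
  cases h with
  | var x => cases hE
  | abs x P => cases hE
  | pair _ _ => cases hE
  | num n => cases n <;> simp [numeral] at hE

lemma not_isValue_app {M P : Tm} (h : IsValue (.app M P)) : False := by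
  generalize hE : Tm.app M P = V at h
  cases h with
  | var x => cases hE
  | abs x P => cases hE
  | pair _ _ => cases hE
  | num n => cases n <;> simp [numeral] at hE

lemma not_isValue_lett {x y : ℕ} {M P : Tm} (h : IsValue (.lett x y M P)) : False := by
  generalize hE : Tm.lett x y M P = V at h
  cases h with
  | var x => cases hE
  | abs x P => cases hE
  | pair _ _ => cases hE
  | num n => cases n <;> simp [numeral] at hE

lemma tm_ne_numeral_pred {M : Tm} {n : ℕ} (h : Tm.pred M = numeral n) : False := by
  cases n <;> simp [numeral] at h
lemma tm_ne_numeral_ifz {M P Q : Tm} {n : ℕ} (h : Tm.ifz M P Q = numeral n) : False := by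
  cases n <;> simp [numeral] at h
lemma tm_ne_numeral_app {M P : Tm} {n : ℕ} (h : Tm.app M P = numeral n) : False := by
  cases n <;> simp [numeral] at h
lemma tm_ne_numeral_pair {M P : Tm} {n : ℕ} (h : Tm.pair M P = numeral n) : False := by
  cases n <;> simp [numeral] at h
lemma tm_ne_numeral_abs {x : ℕ} {M : Tm} {n : ℕ} (h : Tm.abs x M = numeral n) : False := by
  cases n <;> simp [numeral] at h
lemma tm_ne_numeral_lett {x y : ℕ} {M P : Tm} {n : ℕ} (h : Tm.lett x y M P = numeral n) :
    False := by
  cases n <;> simp [numeral] at h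
lemma tm_ne_numeral_var {x : ℕ} {n : ℕ} (h : Tm.var x = numeral n) : False := by
  cases n <;> simp [numeral] at h
lemma tm_ne_numeral_fix {x : ℕ} {M : Tm} {n : ℕ} (h : Tm.fix x M = numeral n) : False := by
  cases n <;> simp [numeral] at h

/-- The main normal-form tracking lemma. -/
lemma rel_nf {N V T : Tm} (hN : ClosedTm N) (h : Rel N V T) (hnf : NormalForm V) :
    ∃ W, NFData N V T W := by
  induction h with
  | @hole Q hQc hQb =>
    exact ⟨Q, (nfdata_self (hQb Q .refl hnf) hnf)⟩
  | var x =>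
    exact ⟨_, nfdata_self .refl hnf⟩
  | zero =>
    exact ⟨_, nfdata_self .refl hnf⟩
  | @succ V₁ T₁ h ih =>
    obtain ⟨W₁, d⟩ := ih (nf_of_succ hnf)
    refine ⟨.succ W₁, ⟨steps_succ d.steps, .succ d.rel, ?_, ?_, ?_, ?_, ?_, ?_, ?_, ?_⟩⟩
    · rintro ⟨X, hX⟩
      cases hX with
      | succ_ctx hX => exact d.nf ⟨_, hX⟩
    · constructor
      · intro hW
        obtain ⟨m, rfl⟩ := isValue_succ_inv hW
        have : V₁ = numeral m := d.num_bwd m rfl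
        rw [this]
        exact isValue_numeral (m + 1)
      · intro hV
        obtain ⟨m, rfl⟩ := isValue_succ_inv hV
        have : W₁ = numeral m := d.num_fwd m rfl
        rw [this]
        exact isValue_numeral (m + 1)
    · intro n hn
      obtain ⟨m, rfl, hV₁⟩ := numeral_succ_inv hn.symm
      rw [d.num_fwd m hV₁]
      simp [numeral]
    · intro n hn
      obtain ⟨m, rfl, hW₁⟩ := numeral_succ_inv hn.symm
      rw [d.num_bwd m hW₁]
      simp [numeral]
    · intro x B h; cases h
    · intro x B h; cases h
    · intro V1 V2 h; cases h
    · intro V1 V2 h; cases h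
  | @pred V₁ T₁ h ih =>
    have hV₁nf : NormalForm V₁ := fun ⟨_, s⟩ => hnf ⟨_, .pred_ctx s⟩
    have hV₁num : ∀ n, V₁ ≠ numeral n := by
      rintro n rfl
      cases n with
      | zero => exact hnf ⟨_, .pred_zero⟩
      | succ m => exact hnf ⟨_, .pred_succ⟩
    obtain ⟨W₁, d⟩ := ih hV₁nf
    refine ⟨.pred W₁, ⟨steps_pred d.steps, .pred d.rel, ?_, ?_, ?_, ?_, ?_, ?_, ?_, ?_⟩⟩
    · rintro ⟨X, hX⟩
      rcases step_pred_inv hX with ⟨M', hM', _⟩ | ⟨hn, _⟩ | ⟨n, hn, _⟩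
      · exact d.nf ⟨_, hM'⟩
      · exact hV₁num 0 (d.num_bwd 0 hn)
      · exact hV₁num (n + 1) (d.num_bwd (n + 1) hn)
    · constructor
      · intro hW; exact absurd hW not_isValue_pred
      · intro hV; exact absurd hV not_isValue_pred
    · intro n hn; exact absurd hn tm_ne_numeral_pred
    · intro n hn; exact absurd hn tm_ne_numeral_pred
    · intro x B h; cases h
    · intro x B h; cases h
    · intro V1 V2 h; cases h
    · intro V1 V2 h; cases h
  | @ifz V₁ T₁ P P' Q Q' h hP hQ ih ihP ihQ =>
    have hV₁nf : NormalForm V₁ := fun ⟨_, s⟩ => hnf ⟨_, .ifz_ctx s⟩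
    have hV₁num : ∀ n, V₁ ≠ numeral n := by
      rintro n rfl
      cases n with
      | zero => exact hnf ⟨_, .ifz_zero⟩
      | succ m => exact hnf ⟨_, .ifz_succ⟩
    obtain ⟨W₁, d⟩ := ih hV₁nf
    refine ⟨.ifz W₁ P' Q', ⟨steps_ifz d.steps, .ifz d.rel hP hQ, ?_, ?_, ?_, ?_, ?_, ?_, ?_, ?_⟩⟩
    · rintro ⟨X, hX⟩
      rcases step_ifz_inv hX with ⟨M', hM', _⟩ | ⟨hn, _⟩ | ⟨n, hn, _⟩
      · exact d.nf ⟨_, hM'⟩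
      · exact hV₁num 0 (d.num_bwd 0 hn)
      · exact hV₁num (n + 1) (d.num_bwd (n + 1) hn)
    · constructor
      · intro hW; exact absurd hW not_isValue_ifz
      · intro hV; exact absurd hV not_isValue_ifz
    · intro n hn; exact absurd hn tm_ne_numeral_ifz
    · intro n hn; exact absurd hn tm_ne_numeral_ifz
    · intro x B h; cases h
    · intro x B h; cases h
    · intro V1 V2 h; cases h
    · intro V1 V2 h; cases h
  | @abs x B B' h =>
    refine ⟨.abs x B', ⟨.refl, .abs x h, value_normal (.abs x B'), ?_, ?_, ?_, ?_, ?_, ?_, ?_⟩⟩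
    · constructor
      · intro _; exact .abs x B
      · intro _; exact .abs x B'
    · intro n hn; exact absurd hn tm_ne_numeral_abs
    · intro n hn; exact absurd hn tm_ne_numeral_abs
    · rintro y C hC; injection hC with h1 h2; subst h1; subst h2; exact ⟨B', rfl, h⟩
    · rintro y C hC; injection hC with h1 h2; subst h1; subst h2; exact ⟨B, rfl, h⟩
    · intro V1 V2 h; cases h
    · intro V1 V2 h; cases h
  | @app V₁ T₁ V₂ T₂ h1 h2 ih1 ih2 =>
    have hV₁nf : NormalForm V₁ := fun ⟨_, s⟩ => hnf ⟨_, .app_left s⟩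
    obtain ⟨W₁, d1⟩ := ih1 hV₁nf
    by_cases habs : ∃ x B', W₁ = .abs x B'
    · obtain ⟨x, B', rfl⟩ := habs
      obtain ⟨B, rfl, hB⟩ := d1.abs_bwd x B' rfl
      have hV₂nf : NormalForm V₂ := fun ⟨_, s⟩ => hnf ⟨_, .app_right s⟩
      have hV₂nv : ¬ IsValue V₂ := fun hv => hnf ⟨_, .beta hv⟩
      obtain ⟨W₂, d2⟩ := ih2 hV₂nf
      have hW₂nv : ¬ IsValue W₂ := fun hv => hV₂nv (d2.val_iff.mp hv)
      refine ⟨.app (.abs x B') W₂,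
        ⟨(steps_app_left d1.steps).trans (steps_app_right d2.steps),
         .app d1.rel d2.rel, ?_, ?_, ?_, ?_, ?_, ?_, ?_, ?_⟩⟩
      · rintro ⟨X, hX⟩
        cases hX with
        | beta hv => exact hW₂nv hv
        | app_right s => exact d2.nf ⟨_, s⟩
        | app_left s => cases s
      · constructor
        · intro hW; exact absurd hW not_isValue_app
        · intro hV; exact absurd hV not_isValue_app
      · intro n hn; exact absurd hn tm_ne_numeral_app
      · intro n hn; exact absurd hn tm_ne_numeral_app
      · intro y C h; cases h
      · intro y C h; cases h
      · intro V1 V2 h; cases h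
      · intro V1 V2 h; cases h
    · refine ⟨.app W₁ T₂,
        ⟨steps_app_left d1.steps, .app d1.rel h2, ?_, ?_, ?_, ?_, ?_, ?_, ?_, ?_⟩⟩
      · rintro ⟨X, hX⟩
        cases hX with
        | beta hv => exact habs ⟨_, _, rfl⟩
        | app_right s => exact habs ⟨_, _, rfl⟩
        | app_left s => exact d1.nf ⟨_, s⟩
      · constructor
        · intro hW; exact absurd hW not_isValue_app
        · intro hV; exact absurd hV not_isValue_app
      · intro n hn; exact absurd hn tm_ne_numeral_app
      · intro n hn; exact absurd hn tm_ne_numeral_app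
      · intro y C h; cases h
      · intro y C h; cases h
      · intro V1 V2 h; cases h
      · intro V1 V2 h; cases h
  | @fixc x B B' h =>
    exact absurd hnf (fun hn => hn ⟨_, .fix_step⟩)
  | @pair V₁ T₁ V₂ T₂ h1 h2 ih1 ih2 =>
    have hV₁nf : NormalForm V₁ := fun ⟨_, s⟩ => hnf ⟨_, .pair_left s⟩
    obtain ⟨W₁, d1⟩ := ih1 hV₁nf
    by_cases hv1 : IsValue V₁
    · have hW₁v : IsValue W₁ := d1.val_iff.mpr hv1
      have hV₂nf : NormalForm V₂ := fun ⟨_, s⟩ => hnf ⟨_, .pair_right hv1 s⟩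
      obtain ⟨W₂, d2⟩ := ih2 hV₂nf
      refine ⟨.pair W₁ W₂,
        ⟨(steps_pair_left d1.steps).trans (steps_pair_right hW₁v d2.steps),
         .pair d1.rel d2.rel, ?_, ?_, ?_, ?_, ?_, ?_, ?_, ?_⟩⟩
      · rintro ⟨X, hX⟩
        cases hX with
        | pair_left s => exact d1.nf ⟨_, s⟩
        | pair_right _ s => exact d2.nf ⟨_, s⟩
      · constructor
        · intro hW
          obtain ⟨_, hw2⟩ := isValue_pair_inv hW
          exact .pair hv1 (d2.val_iff.mp hw2)
        · intro hV
          obtain ⟨_, hv2⟩ := isValue_pair_inv hV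
          exact .pair hW₁v (d2.val_iff.mpr hv2)
      · intro n hn; exact absurd hn tm_ne_numeral_pair
      · intro n hn; exact absurd hn tm_ne_numeral_pair
      · intro y C h; cases h
      · intro y C h; cases h
      · rintro X1 X2 hX; injection hX with e1 e2; subst e1; subst e2
        exact ⟨W₁, W₂, rfl, d1.rel, d2.rel⟩
      · rintro X1 X2 hX; injection hX with e1 e2; subst e1; subst e2
        exact ⟨V₁, V₂, rfl, d1.rel, d2.rel⟩
    · have hW₁nv : ¬ IsValue W₁ := fun hv => hv1 (d1.val_iff.mp hv)
      refine ⟨.pair W₁ T₂,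
        ⟨steps_pair_left d1.steps, .pair d1.rel h2, ?_, ?_, ?_, ?_, ?_, ?_, ?_, ?_⟩⟩
      · rintro ⟨X, hX⟩
        cases hX with
        | pair_left s => exact d1.nf ⟨_, s⟩
        | pair_right hv _ => exact hW₁nv hv
      · constructor
        · intro hW
          obtain ⟨hw1, _⟩ := isValue_pair_inv hW
          exact absurd hw1 hW₁nv
        · intro hV
          obtain ⟨hv, _⟩ := isValue_pair_inv hV
          exact absurd hv hv1
      · intro n hn; exact absurd hn tm_ne_numeral_pair
      · intro n hn; exact absurd hn tm_ne_numeral_pair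
      · intro y C h; cases h
      · intro y C h; cases h
      · rintro X1 X2 hX; injection hX with e1 e2; subst e1; subst e2
        exact ⟨W₁, T₂, rfl, d1.rel, h2⟩
      · rintro X1 X2 hX; injection hX with e1 e2; subst e1; subst e2
        exact ⟨V₁, V₂, rfl, d1.rel, h2⟩
  | @lett x y V₁ T₁ P P' h1 hP ih1 ihP =>
    have hV₁nf : NormalForm V₁ := fun ⟨_, s⟩ => hnf ⟨_, .lett_ctx s⟩
    obtain ⟨W₁, d1⟩ := ih1 hV₁nf
    refine ⟨.lett x y W₁ P', ⟨steps_lett d1.steps, .lett x y d1.rel hP, ?_, ?_, ?_, ?_, ?_, ?_, ?_, ?_⟩⟩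
    · rintro ⟨X, hX⟩
      cases hX with
      | lett_ctx s => exact d1.nf ⟨_, s⟩
      | lett_beta hv hw =>
        obtain ⟨U1, U2, hU, _, _⟩ := d1.pair_bwd _ _ rfl
        have hval : IsValue V₁ := d1.val_iff.mp (.pair hv hw)
        rw [hU] at hval
        obtain ⟨hu1, hu2⟩ := isValue_pair_inv hval
        exact hnf ⟨_, by rw [hU]; exact Step.lett_beta hu1 hu2⟩
    · constructor
      · intro hW; exact absurd hW not_isValue_lett
      · intro hV; exact absurd hV not_isValue_lett
    · intro n hn; exact absurd hn tm_ne_numeral_lett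
    · intro n hn; exact absurd hn tm_ne_numeral_lett
    · intro z C h; cases h
    · intro z C h; cases h
    · intro V1 V2 h; cases h
    · intro V1 V2 h; cases h

/-- One-step weak simulation. -/
lemma rel_step {N S T S' : Tm} (hN : ClosedTm N) (h : Rel N S T) (hs : Step S S') :
    ∃ T', Steps T T' ∧ Rel N S' T' := by
  induction h generalizing S' with
  | @hole Q hQc hQb =>
    refine ⟨N, .refl, .hole (step_closed hs hQc) ?_⟩
    intro R hR hRnf
    exact hQb R (.head hs hR) hRnf
  | var x => exact absurd hs (fun h => by cases h)
  | zero => exact absurd hs (fun h => by cases h)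
  | @succ V₁ T₁ h ih =>
    cases hs with
    | succ_ctx s =>
      obtain ⟨T₁', hT, hR⟩ := ih s
      exact ⟨.succ T₁', steps_succ hT, .succ hR⟩
  | @pred V₁ T₁ h ih =>
    rcases step_pred_inv hs with ⟨M', hM', rfl⟩ | ⟨hn, rfl⟩ | ⟨n, hn, rfl⟩
    · obtain ⟨T₁', hT, hR⟩ := ih hM'
      exact ⟨.pred T₁', steps_pred hT, .pred hR⟩
    · subst hn
      obtain ⟨W, d⟩ := rel_nf hN h (value_normal (isValue_numeral 0))
      have hW : W = numeral 0 := d.num_fwd 0 rfl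
      subst hW
      exact ⟨numeral 0, (steps_pred d.steps).trans (.single .pred_zero),
        rel_refl N _⟩
    · subst hn
      obtain ⟨W, d⟩ := rel_nf hN h (value_normal (isValue_numeral (n + 1)))
      have hW : W = numeral (n + 1) := d.num_fwd (n + 1) rfl
      subst hW
      exact ⟨numeral n, (steps_pred d.steps).trans (.single .pred_succ),
        rel_refl N _⟩
  | @ifz V₁ T₁ P P' Q Q' h hP hQ ih ihP ihQ =>
    rcases step_ifz_inv hs with ⟨M', hM', rfl⟩ | ⟨hn, rfl⟩ | ⟨n, hn, rfl⟩
    · obtain ⟨T₁', hT, hR⟩ := ih hM'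
      exact ⟨.ifz T₁' P' Q', steps_ifz hT, .ifz hR hP hQ⟩
    · subst hn
      obtain ⟨W, d⟩ := rel_nf hN h (value_normal (isValue_numeral 0))
      have hW : W = numeral 0 := d.num_fwd 0 rfl
      subst hW
      exact ⟨P', (steps_ifz d.steps).trans (.single .ifz_zero), hP⟩
    · subst hn
      obtain ⟨W, d⟩ := rel_nf hN h (value_normal (isValue_numeral (n + 1)))
      have hW : W = numeral (n + 1) := d.num_fwd (n + 1) rfl
      subst hW
      exact ⟨Q', (steps_ifz d.steps).trans (.single .ifz_succ), hQ⟩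
  | abs x h => exact absurd hs (fun h => by cases h)
  | @app V₁ T₁ V₂ T₂ h1 h2 ih1 ih2 =>
    cases hs with
    | app_left s =>
      obtain ⟨T₁', hT, hR⟩ := ih1 s
      exact ⟨.app T₁' T₂, steps_app_left hT, .app hR h2⟩
    | app_right s =>
      -- V₁ = .abs x B
      obtain ⟨W₁, d1⟩ := rel_nf hN h1 (value_normal (.abs _ _))
      obtain ⟨B', hW₁, hBB'⟩ := d1.abs_fwd _ _ rfl
      subst hW₁
      obtain ⟨T₂', hT, hR⟩ := ih2 s
      exact ⟨.app (.abs _ B') T₂',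
        (steps_app_left d1.steps).trans (steps_app_right hT),
        .app d1.rel hR⟩
    | beta hv =>
      obtain ⟨W₁, d1⟩ := rel_nf hN h1 (value_normal (.abs _ _))
      obtain ⟨B', hW₁, hBB'⟩ := d1.abs_fwd _ _ rfl
      subst hW₁
      obtain ⟨W₂, d2⟩ := rel_nf hN h2 (value_normal hv)
      have hW₂v : IsValue W₂ := d2.val_iff.mpr hv
      refine ⟨_, ((steps_app_left d1.steps).trans (steps_app_right d2.steps)).trans
        (.single (.beta hW₂v)), ?_⟩
      exact rel_subst hN _ hBB' d2.rel
  | @fixc x B B' h =>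
    cases hs with
    | fix_step =>
      exact ⟨_, .single .fix_step, rel_subst hN x h (.fixc x h)⟩
  | @pair V₁ T₁ V₂ T₂ h1 h2 ih1 ih2 =>
    cases hs with
    | pair_left s =>
      obtain ⟨T₁', hT, hR⟩ := ih1 s
      exact ⟨.pair T₁' T₂, steps_pair_left hT, .pair hR h2⟩
    | pair_right hv s =>
      obtain ⟨W₁, d1⟩ := rel_nf hN h1 (value_normal hv)
      have hW₁v : IsValue W₁ := d1.val_iff.mpr hv
      obtain ⟨T₂', hT, hR⟩ := ih2 s
      exact ⟨.pair W₁ T₂',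
        (steps_pair_left d1.steps).trans (steps_pair_right hW₁v hT),
        .pair d1.rel hR⟩
  | @lett x y V₁ T₁ P P' h1 hP ih1 ihP =>
    cases hs with
    | lett_ctx s =>
      obtain ⟨T₁', hT, hR⟩ := ih1 s
      exact ⟨.lett x y T₁' P', steps_lett hT, .lett x y hR hP⟩
    | lett_beta hv hw =>
      obtain ⟨W₁, d1⟩ := rel_nf hN h1 (value_normal (.pair hv hw))
      obtain ⟨Wa, Wb, hW₁, hRa, hRb⟩ := d1.pair_fwd _ _ rfl
      subst hW₁
      have hWv : IsValue (Tm.pair Wa Wb) := d1.val_iff.mpr (.pair hv hw)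
      obtain ⟨hWa, hWb⟩ := isValue_pair_inv hWv
      refine ⟨_, (steps_lett d1.steps).trans (.single (.lett_beta hWa hWb)), ?_⟩
      exact rel_subst hN y (rel_subst hN x hP hRa) hRb

/-- Many-step weak simulation. -/
lemma rel_steps {N S T S' : Tm} (hN : ClosedTm N) (h : Rel N S T) (hs : Steps S S') :
    ∃ T', Steps T T' ∧ Rel N S' T' := by
  induction hs using Relation.ReflTransGen.head_induction_on generalizing T with
  | refl => exact ⟨T, .refl, h⟩
  | head s _ ih =>
    obtain ⟨T₀, hT₀, hR₀⟩ := rel_step hN h s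
    obtain ⟨T', hT', hR'⟩ := ih hR₀
    exact ⟨T', hT₀.trans hT', hR'⟩

lemma steps_of_nf {M R : Tm} (h : Steps M R) (hM : NormalForm M) : R = M := by
  rcases Relation.ReflTransGen.cases_head h with rfl | ⟨c, hc, _⟩
  · rfl
  · exact absurd ⟨_, hc⟩ hM

lemma rel_nf_value {N V W : Tm} (hN : ClosedTm N) (h : Rel N V W)
    (hVnf : NormalForm V) (hWnf : NormalForm W) : NFData N V W W := by
  obtain ⟨W', d⟩ := rel_nf hN h hVnf
  rwa [steps_of_nf d.steps hWnf] at d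

lemma sem_value : ∀ {A : Ty} {W : Tm}, Sem A W → IsValue W := by
  intro A
  induction A with
  | nat =>
    intro W h
    simp only [Sem] at h
    obtain ⟨n, rfl⟩ := h
    exact isValue_numeral n
  | prod A B ihA ihB =>
    intro W h
    simp only [Sem] at h
    obtain ⟨V, W', rfl, h1, h2⟩ := h
    exact .pair (ihA h1) (ihB h2)
  | arrow A B ihA ihB =>
    intro W h
    simp only [Sem] at h
    obtain ⟨x, P, rfl, _, _⟩ := h
    exact .abs x P
  | narrow A F ihA =>
    intro W h
    simp only [Sem] at h
    obtain ⟨x, P, rfl, _, _⟩ := h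
    exact .abs x P
  | ok =>
    intro W h
    exact h.2

lemma fsem_value : ∀ {F : FTy} {V : Tm}, FSem F V → IsValue V := by
  intro F
  induction F with
  | nat =>
    intro V h
    simp only [FSem] at h
    obtain ⟨n, rfl⟩ := h
    exact isValue_numeral n
  | prod F1 F2 ih1 ih2 =>
    intro V h
    simp only [FSem] at h
    obtain ⟨V1, V2, rfl, h1, h2⟩ := h
    exact .pair (ih1 h1) (ih2 h2)

lemma rel_fsem_steps {N : Tm} (hN : ClosedTm N) :
    ∀ {F : FTy} {V T : Tm}, Rel N V T → FSem F V → Steps T V := by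
  intro F
  induction F with
  | nat =>
    intro V T h hF
    simp only [FSem] at hF
    obtain ⟨n, rfl⟩ := hF
    obtain ⟨W, d⟩ := rel_nf hN h (value_normal (isValue_numeral n))
    rw [← d.num_fwd n rfl]
    exact d.steps
  | prod F1 F2 ih1 ih2 =>
    intro V T h hF
    simp only [FSem] at hF
    obtain ⟨V1, V2, rfl, h1, h2⟩ := hF
    have hv1 := fsem_value h1
    have hv2 := fsem_value h2
    obtain ⟨W, d⟩ := rel_nf hN h (value_normal (.pair hv1 hv2))
    obtain ⟨W1, W2, rfl, r1, r2⟩ := d.pair_fwd _ _ rfl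
    exact d.steps.trans
      ((steps_pair_left (ih1 r1 h1)).trans (steps_pair_right hv1 (ih2 r2 h2)))

lemma tsem_up {N S T : Tm} {F : FTy} (hN : ClosedTm N) (hrel : Rel N S T)
    (h : TSem (FSem F) S) : TSem (FSem F) T := by
  obtain ⟨hclS, V, hSV, hVval, hVF⟩ := h
  refine ⟨?_, V, ?_, hVval, hVF⟩
  · simp only [ClosedTm] at *
    rw [← rel_fv hN hrel]
    exact hclS
  · obtain ⟨T₀, hTT₀, hrel₀⟩ := rel_steps hN hrel hSV
    exact hTT₀.trans (rel_fsem_steps hN hrel₀ hVF)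

lemma tbar_dc {N S T : Tm} {Sv : Tm → Prop} (hN : ClosedTm N)
    (hsv : ∀ V W, Rel N V W → IsValue V → Sv W → Sv V)
    (hrel : Rel N S T) (hT : TBarSem Sv T) : TBarSem Sv S := by
  have hclT : ClosedTm T := by rcases hT with ⟨h, _⟩ | ⟨h, _⟩ <;> exact h
  have hclS : ClosedTm S := by
    simp only [ClosedTm] at *
    rw [rel_fv hN hrel]
    exact hclT
  by_cases hdiv : ∃ R, Steps S R ∧ NormalForm R
  · obtain ⟨R, hSR, hRnf⟩ := hdiv
    obtain ⟨T₀, hTT₀, hrel₀⟩ := rel_steps hN hrel hSR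
    obtain ⟨W, d⟩ := rel_nf hN hrel₀ hRnf
    rcases hT with ⟨_, U, hTU, hUval, hUSv⟩ | ⟨_, hTdiv⟩
    · have hUW : U = W :=
        steps_nf_unique hTU (value_normal hUval) W (hTT₀.trans d.steps) d.nf
      rw [hUW] at hUval hUSv
      exact .inl ⟨hclS, R, hSR, d.val_iff.mp hUval, hsv R W d.rel (d.val_iff.mp hUval) hUSv⟩
    · exact absurd ⟨W, hTT₀.trans d.steps, d.nf⟩ hTdiv
  · exact .inr ⟨hclS, hdiv⟩

/-- Semantic sets of values are downward closed along `Rel`. -/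
lemma sem_dc {N : Tm} (hN : ClosedTm N) :
    ∀ (A : Ty) (V W : Tm), Rel N V W → IsValue V → Sem A W → Sem A V := by
  intro A
  induction A with
  | nat =>
    intro V W hR hV hW
    simp only [Sem] at hW ⊢
    obtain ⟨n, rfl⟩ := hW
    have d := rel_nf_value hN hR (value_normal hV) (value_normal (isValue_numeral n))
    exact ⟨n, d.num_bwd n rfl⟩
  | prod A B ihA ihB =>
    intro V W hR hV hW
    simp only [Sem] at hW ⊢
    obtain ⟨W1, W2, rfl, s1, s2⟩ := hW
    have d := rel_nf_value hN hR (value_normal hV)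
      (value_normal (.pair (sem_value s1) (sem_value s2)))
    obtain ⟨V1, V2, rfl, r1, r2⟩ := d.pair_bwd _ _ rfl
    obtain ⟨hv1, hv2⟩ := isValue_pair_inv hV
    exact ⟨V1, V2, rfl, ihA _ _ r1 hv1 s1, ihB _ _ r2 hv2 s2⟩
  | arrow A B ihA ihB =>
    intro V W hR hV hW
    simp only [Sem] at hW ⊢
    obtain ⟨x, P', rfl, hclW, hbody⟩ := hW
    have d := rel_nf_value hN hR (value_normal hV) (value_normal (.abs x P'))
    obtain ⟨B0, rfl, hB⟩ := d.abs_bwd x P' rfl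
    refine ⟨x, B0, rfl, ?_, ?_⟩
    · simp only [ClosedTm] at hclW ⊢
      rw [rel_fv hN hR]
      exact hclW
    · intro V₀ hc hv hs
      exact tbar_dc hN ihB (rel_subst hN x hB (rel_refl N V₀)) (hbody V₀ hc hv hs)
  | narrow A F ihA =>
    intro V W hR hV hW
    simp only [Sem] at hW ⊢
    obtain ⟨x, P', rfl, hclW, hbody⟩ := hW
    have d := rel_nf_value hN hR (value_normal hV) (value_normal (.abs x P'))
    obtain ⟨B0, rfl, hB⟩ := d.abs_bwd x P' rfl
    refine ⟨x, B0, rfl, ?_, ?_⟩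
    · simp only [ClosedTm] at hclW ⊢
      rw [rel_fv hN hR]
      exact hclW
    · intro V₀ hc hv hts
      exact hbody V₀ hc hv (tsem_up hN (rel_subst hN x hB (rel_refl N V₀)) hts)
  | ok =>
    intro V W hR hV hW
    refine ⟨?_, hV⟩
    simp only [ClosedTm] at hW ⊢
    rw [rel_fv hN hR]
    exact hW.1

/-- Types are downward closed w.r.t. the introduction of
divergence. -/
theorem types_downward_closed (M : Tm) (z : ℕ) (N Q : Tm)
    (hN : ClosedTm N) (hQ : ClosedTm Q) (hle : RefBelow Q N)
    (hcl : ClosedTm (subst z N M)) :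
    (∀ A : Ty, TBarSem (Sem A) (subst z N M) → TBarSem (Sem A) (subst z Q M)) ∧
    (∀ F : FTy, ¬ TSem (FSem F) (subst z N M) → ¬ TSem (FSem F) (subst z Q M)) := by
  have hrel : Rel N (subst z Q M) (subst z N M) := rel_init hQ hle z M
  constructor
  · intro A h
    exact tbar_dc hN (fun V W hR hV hS => sem_dc hN A V W hR hV hS) hrel h
  · intro F h hS
    exact h (tsem_up hN hrel hS)

end PCF
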